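/- Let $X \sim \mathrm{Exp}(\lambda)$ with $\lambda > 0$ and let $p \sim U(a,b)$ with $0 < a < b \le 1$ be independent. Then $\lambda \cdot \mathbb{E}[(1 - e^{-X})(1 - \log_2 p) - X] = \frac{\lambda}{\lambda + 1}\left(1 + \frac{1}{\ln 2} - \frac{b \log_2 b - a \log_2 a}{b-a}\right) - 1$. -/

import Mathlib

open MeasureTheory Set Real

private lemma intOn_exp' {r : ℝ} (hr : 0 < r) :
    IntegrableOn (fun x : ℝ => Real.exp (-(r * x))) (Set.Ioi 0) := by
  simpa [neg_mul] using exp_neg_integrableOn_Ioi 0 hr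

private lemma intOn_xexp' {r : ℝ} (hr : 0 < r) :
    IntegrableOn (fun x : ℝ => x * Real.exp (-(r * x))) (Set.Ioi 0) := by
  have := integrableOn_rpow_mul_exp_neg_mul_rpow (s := 1) (p := 1) (b := r)
    (by norm_num) one_pos hr
  simpa [Real.rpow_one, neg_mul] using this

private lemma int_exp' {r : ℝ} (hr : 0 < r) :
    ∫ x in Set.Ioi (0:ℝ), Real.exp (-(r * x)) = 1 / r := by
  have := Real.integral_rpow_mul_exp_neg_mul_Ioi (a := 1) one_pos hr
  simpa [Real.rpow_one, Real.Gamma_one] using this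

private lemma int_xexp' {r : ℝ} (hr : 0 < r) :
    ∫ x in Set.Ioi (0:ℝ), x * Real.exp (-(r * x)) = 1 / r ^ 2 := by
  have h := Real.integral_rpow_mul_exp_neg_mul_Ioi (a := 2) two_pos hr
  have h2 : ((2:ℝ) - 1) = 1 := by norm_num
  rw [h2] at h
  simp only [Real.rpow_one] at h
  rw [h, Real.Gamma_two, mul_one, show (2:ℝ) = ((2:ℕ):ℝ) by norm_num,
    Real.rpow_natCast, div_pow, one_pow]

/-- Closed form of the time-average DoPE `H̄ = λ E[Q_i]` for independent
`X ~ Exp(λ)` and `p ~ U(a,b)`. -/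
theorem time_average_dope (l a b : ℝ) (hl : 0 < l) (ha : 0 < a) (hab : a < b) (hb : b ≤ 1) :
    l * ∫ x in Set.Ioi (0:ℝ), ∫ p in a..b,
        (((1 - Real.exp (-x)) * (1 - Real.logb 2 p) - x)
          * (l * Real.exp (-(l * x))) * (b - a)⁻¹)
      = l / (l + 1) * (1 + 1 / Real.log 2
          - (b * Real.logb 2 b - a * Real.logb 2 a) / (b - a)) - 1 := by
  have hb0 : 0 < b := ha.trans hab
  have hba : (0:ℝ) < b - a := sub_pos.mpr hab
  have hba' : b - a ≠ 0 := ne_of_gt hba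
  have hlog2 : Real.log 2 ≠ 0 := ne_of_gt (Real.log_pos one_lt_two)
  set C : ℝ := 1 + 1 / Real.log 2
      - (b * Real.logb 2 b - a * Real.logb 2 a) / (b - a) with hC
  -- integrability of logb on [a, b]
  have hnotmem : (0:ℝ) ∉ uIcc a b := notMem_uIcc_of_lt ha hb0
  have hlogbInt : IntervalIntegrable (fun p => Real.logb 2 p) volume a b := by
    have := (intervalIntegral.intervalIntegrable_log (μ := MeasureTheory.volume) hnotmem).div_const (Real.log 2)
    simpa [Real.logb] using this
  -- inner integral
  have hinner : ∀ x : ℝ,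
      (∫ p in a..b, (((1 - Real.exp (-x)) * (1 - Real.logb 2 p) - x)
          * (l * Real.exp (-(l * x))) * (b - a)⁻¹))
        = l * C * Real.exp (-(l * x)) - l * C * Real.exp (-((l + 1) * x))
            - l * (x * Real.exp (-(l * x))) := by
    intro x
    have hptwise : ∀ p : ℝ,
        ((1 - Real.exp (-x)) * (1 - Real.logb 2 p) - x)
            * (l * Real.exp (-(l * x))) * (b - a)⁻¹
          = ((1 - Real.exp (-x)) - x) * (l * Real.exp (-(l * x))) * (b - a)⁻¹
            - ((1 - Real.exp (-x)) * (l * Real.exp (-(l * x))) * (b - a)⁻¹)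
                * Real.logb 2 p := by
      intro p; ring
    have hloge : ∫ p in a..b, Real.logb 2 p
        = (b * Real.log b - a * Real.log a - b + a) / Real.log 2 := by
      have : (fun p : ℝ => Real.logb 2 p) = fun p => Real.log p / Real.log 2 := by
        funext p; simp [Real.logb]
      rw [this, intervalIntegral.integral_div, integral_log]
    simp_rw [hptwise]
    rw [intervalIntegral.integral_sub (intervalIntegrable_const)
        (hlogbInt.const_mul _), intervalIntegral.integral_const,
      intervalIntegral.integral_const_mul, hloge]
    have hexp : Real.exp (-((l + 1) * x)) = Real.exp (-(l * x)) * Real.exp (-x) := by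
      rw [← Real.exp_add]; ring_nf
    rw [hC, hexp]
    simp only [Real.logb, smul_eq_mul]
    field_simp
    ring
  simp_rw [hinner]
  -- integrability pieces
  have I1 : IntegrableOn (fun x : ℝ => l * C * Real.exp (-(l * x))) (Set.Ioi 0) :=
    (intOn_exp' hl).const_mul _
  have hl1 : (0:ℝ) < l + 1 := by linarith
  have I2 : IntegrableOn (fun x : ℝ => l * C * Real.exp (-((l + 1) * x))) (Set.Ioi 0) :=
    (intOn_exp' hl1).const_mul _
  have I3 : IntegrableOn (fun x : ℝ => l * (x * Real.exp (-(l * x)))) (Set.Ioi 0) :=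
    (intOn_xexp' hl).const_mul _
  have I12 : IntegrableOn (fun x : ℝ => l * C * Real.exp (-(l * x))
      - l * C * Real.exp (-((l + 1) * x))) (Set.Ioi 0) := I1.sub I2
  rw [MeasureTheory.integral_sub I12 I3, MeasureTheory.integral_sub I1 I2,
    MeasureTheory.integral_const_mul, MeasureTheory.integral_const_mul,
    MeasureTheory.integral_const_mul, int_exp' hl, int_exp' hl1, int_xexp' hl]
  have hlne : l ≠ 0 := ne_of_gt hl
  have hl1ne : l + 1 ≠ 0 := ne_of_gt hl1
  field_simp
  ring
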